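/- Assume the abstract reduced crossed product setup for an action α : Γ → Aut(A) with (SAveP), with ambient C*-algebra B, unitaries (u_t), and conditional expectation E : B → A. Let x ∈ B and t ∈ Γ be such that E_t(x) = 1_A. Then u_t ∈ C_A^{α_{t⁻¹}}(x), the norm-closed convex hull in B of {v x α_{t⁻¹}(v)* : v a unitary element of A}. -/
import Mathlib


/-- For a unital C*-subalgebra `A` of `B`, a map `f` on `A`, and `b ∈ B`, the norm-closed
convex hull in `B` of `{v * b * star (f v) : v a unitary element of A}`.  For `f = id`
this is `C_A(b)`; for `f = β` an automorphism of `A` it is `C_A^β(b)`. -/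
def relC {B : Type*} [NormedRing B] [StarRing B] [CStarRing B] [NormedAlgebra ℂ B]
    [CompleteSpace B] [StarModule ℂ B]
    (A : StarSubalgebra ℂ B) (f : ↥A → ↥A) (b : B) : Set B :=
  closure (convexHull ℝ
    {y : B | ∃ v : ↥A, v ∈ unitary ↥A ∧ y = (v : B) * b * star ((f v : ↥A) : B)})

set_option linter.unusedSectionVars false
set_option linter.unusedVariables false

section Aux
variable {B : Type*} [NormedRing B] [StarRing B] [CStarRing B] [NormedAlgebra ℂ B]
    [CompleteSpace B] [StarModule ℂ B] (A : StarSubalgebra ℂ B)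

noncomputable def conjCLM (a b : B) : B →L[ℂ] B :=
  ((ContinuousLinearMap.mul ℂ B) a).comp (((ContinuousLinearMap.mul ℂ B).flip) b)

@[simp] lemma conjCLM_apply (a b z : B) : conjCLM a b z = a * (z * b) := rfl

noncomputable def genSet : Set (B →L[ℂ] B) :=
  (fun v : ↥A => conjCLM (v : B) (star (v : B))) '' (unitary ↥A)

noncomputable def avgSet : Set (B →L[ℂ] B) := convexHull ℝ (genSet A)

lemma coe_mem_unitary {v : ↥A} (hv : v ∈ unitary ↥A) : ((v : B) ∈ unitary B) := by
  constructor
  · have h : ((star v * v : ↥A) : B) = ((1 : ↥A) : B) := by rw [hv.1]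
    simpa using h
  · have h : ((v * star v : ↥A) : B) = ((1 : ↥A) : B) := by rw [hv.2]
    simpa using h

noncomputable def compRightₗ (Ψ : B →L[ℂ] B) : (B →L[ℂ] B) →ₗ[ℝ] (B →L[ℂ] B) where
  toFun Φ := Φ.comp Ψ
  map_add' Φ₁ Φ₂ := ContinuousLinearMap.add_comp _ _ _
  map_smul' r Φ := ContinuousLinearMap.smul_comp _ _ _

noncomputable def compLeftₗ (Φ : B →L[ℂ] B) : (B →L[ℂ] B) →ₗ[ℝ] (B →L[ℂ] B) where
  toFun Ψ := Φ.comp Ψ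
  map_add' Ψ₁ Ψ₂ := ContinuousLinearMap.comp_add _ _ _
  map_smul' r Ψ := ContinuousLinearMap.comp_smul _ _ _

lemma genSet_comp_mem {Φ Ψ : B →L[ℂ] B} (hΦ : Φ ∈ genSet A) (hΨ : Ψ ∈ genSet A) :
    Φ.comp Ψ ∈ genSet A := by
  obtain ⟨v, hv, rfl⟩ := hΦ
  obtain ⟨w, hw, rfl⟩ := hΨ
  refine ⟨v * w, mul_mem hv hw, ?_⟩
  ext z
  simp [mul_assoc]

lemma avgSet_comp_mem {Φ Ψ : B →L[ℂ] B} (hΦ : Φ ∈ avgSet A) (hΨ : Ψ ∈ avgSet A) :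
    Φ.comp Ψ ∈ avgSet A := by
  have key : ∀ Φ₀ ∈ genSet A, Φ₀.comp Ψ ∈ avgSet A := by
    intro Φ₀ hΦ₀
    have : avgSet A ⊆ (compLeftₗ Φ₀) ⁻¹' avgSet A := by
      apply convexHull_min ?_ ((convex_convexHull ℝ _).linear_preimage _)
      intro Ψ₀ hΨ₀
      exact subset_convexHull ℝ _ (genSet_comp_mem A hΦ₀ hΨ₀)
    exact this hΨ
  have : avgSet A ⊆ (compRightₗ Ψ) ⁻¹' avgSet A := by
    apply convexHull_min ?_ ((convex_convexHull ℝ _).linear_preimage _)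
    intro Φ₀ hΦ₀
    exact key Φ₀ hΦ₀
  exact this hΦ

lemma avgSet_norm_le {Ψ : B →L[ℂ] B} (hΨ : Ψ ∈ avgSet A) (z : B) : ‖Ψ z‖ ≤ ‖z‖ := by
  have : avgSet A ⊆ {Φ : B →L[ℂ] B | ‖Φ z‖ ≤ ‖z‖} := by
    apply convexHull_min
    · rintro Φ ⟨v, hv, rfl⟩
      simp only [Set.mem_setOf_eq, conjCLM_apply]
      rw [CStarRing.norm_mem_unitary_mul _ (coe_mem_unitary A hv),
        CStarRing.norm_mul_mem_unitary _ (Unitary.star_mem (coe_mem_unitary A hv))]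
    · intro Φ₁ h₁ Φ₂ h₂ p q hp hq hpq
      simp only [Set.mem_setOf_eq, ContinuousLinearMap.add_apply,
        ContinuousLinearMap.smul_apply] at *
      calc ‖p • Φ₁ z + q • Φ₂ z‖ ≤ p * ‖Φ₁ z‖ + q * ‖Φ₂ z‖ := by
            refine (norm_add_le _ _).trans ?_
            rw [norm_smul, norm_smul, Real.norm_of_nonneg hp, Real.norm_of_nonneg hq]
        _ ≤ p * ‖z‖ + q * ‖z‖ := by gcongr
        _ = ‖z‖ := by rw [← add_mul, hpq, one_mul]
  exact this hΨ

lemma avgSet_map_one {Ψ : B →L[ℂ] B} (hΨ : Ψ ∈ avgSet A) : Ψ 1 = 1 := by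
  have : avgSet A ⊆ {Φ : B →L[ℂ] B | Φ 1 = 1} := by
    apply convexHull_min
    · rintro Φ ⟨v, hv, rfl⟩
      have h : (v : B) * star (v : B) = 1 := (coe_mem_unitary A hv).2
      simp [h]
    · intro Φ₁ h₁ Φ₂ h₂ p q hp hq hpq
      simp only [Set.mem_setOf_eq, ContinuousLinearMap.add_apply,
        ContinuousLinearMap.smul_apply] at *
      rw [h₁, h₂, ← add_smul, hpq, one_smul]
  exact this hΨ

noncomputable def evalMulₗ (y c : B) : (B →L[ℂ] B) →ₗ[ℝ] B where
  toFun Φ := Φ y * c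
  map_add' Φ₁ Φ₂ := by simp [add_mul]
  map_smul' r Φ := by simp [smul_mul_assoc]

@[simp] lemma evalMulₗ_apply (y c : B) (Φ : B →L[ℂ] B) :
    evalMulₗ (B := B) y c Φ = Φ y * c := rfl

lemma image_avgSet (y c : B) :
    (evalMulₗ (B := B) y c) '' avgSet A = convexHull ℝ ((evalMulₗ (B := B) y c) '' genSet A) :=
  LinearMap.image_convexHull _ _

lemma convex_A : Convex ℝ (A : Set B) := by
  intro a ha b hb p q hp hq hpq
  exact A.add_mem (by rw [← IsScalarTower.algebraMap_smul ℂ p a]; exact A.smul_mem ha _)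
    (by rw [← IsScalarTower.algebraMap_smul ℂ q b]; exact A.smul_mem hb _)

variable {Γ : Type*} [Group Γ] (u : Γ →* unitary B) (α : Γ → (↥A ≃⋆ₐ[ℂ] ↥A))
  (hαu : ∀ (t : Γ) (a : ↥A), ((α t a : ↥A) : B) = (u t : B) * (a : B) * star (u t : B))

include hαu

lemma star_alpha (s : Γ) (v : ↥A) :
    star ((α s v : ↥A) : B) = (u s : B) * (star (v : B) * star (u s : B)) := by
  rw [hαu]
  simp [star_mul, mul_assoc]

lemma evalMul_gen (b : B) (s : Γ) {v : ↥A} (hv : v ∈ unitary ↥A) :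
    (evalMulₗ (B := B) (b * (u s : B)) (star (u s : B)))
      (conjCLM (v : B) (star (v : B))) = (v : B) * b * star ((α s v : ↥A) : B) := by
  rw [star_alpha A u α hαu]
  show (v : B) * ((b * (u s : B)) * star (v : B)) * star (u s : B) = _
  simp [mul_assoc]

lemma avgSet_conj_mem_A {Ψ : B →L[ℂ] B} (hΨ : Ψ ∈ avgSet A) {b : B} (hb : b ∈ A) (s : Γ) :
    Ψ (b * (u s : B)) * star (u s : B) ∈ A := by
  have himg : (evalMulₗ (B := B) (b * (u s : B)) (star (u s : B))) '' avgSet A ⊆ (A : Set B) := by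
    rw [image_avgSet]
    apply convexHull_min ?_ (convex_A A)
    rintro _ ⟨_, ⟨v, hv, rfl⟩, rfl⟩
    rw [evalMul_gen A u α hαu b s hv]
    exact A.mul_mem (A.mul_mem v.2 hb) (star (α s v)).2
  exact himg ⟨Ψ, hΨ, rfl⟩


variable (hSAveP : ∀ t : Γ, t ≠ 1 → ∀ b ∈ A, (0 : B) ∈ relC A (⇑(α t)) b)
include hSAveP

lemma exists_avg_small {s : Γ} (hs : s ≠ 1) {c : B} (hc : c ∈ A) {δ : ℝ} (hδ : 0 < δ) :
    ∃ Φ ∈ avgSet A, ‖Φ (c * (u s : B))‖ < δ := by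
  have h0 := hSAveP s hs c hc
  unfold relC at h0
  obtain ⟨p, hp, hpδ⟩ := Metric.mem_closure_iff.1 h0 δ hδ
  rw [dist_zero_left] at hpδ
  have hT : {y : B | ∃ v : ↥A, v ∈ unitary ↥A ∧ y = (v : B) * c * star ((α s v : ↥A) : B)}
      ⊆ (evalMulₗ (B := B) (c * (u s : B)) (star (u s : B))) '' genSet A := by
    rintro y ⟨v, hv, rfl⟩
    exact ⟨conjCLM (v : B) (star (v : B)), ⟨v, hv, rfl⟩, evalMul_gen A u α hαu c s hv⟩
  have hp' : p ∈ (evalMulₗ (B := B) (c * (u s : B)) (star (u s : B))) '' avgSet A := by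
    rw [image_avgSet]
    exact convexHull_mono hT hp
  obtain ⟨Φ, hΦ, hFΦ⟩ := hp'
  refine ⟨Φ, hΦ, ?_⟩
  have key : Φ (c * (u s : B)) = p * (u s : B) := by
    rw [← hFΦ]
    show Φ (c * (u s : B)) = (Φ (c * (u s : B)) * star ((u s : unitary B) : B)) * (u s : B)
    rw [mul_assoc, Unitary.coe_star_mul_self (u s), mul_one]
  rw [key, CStarRing.norm_mul_mem_unitary _ (u s).2]
  exact hpδ

lemma exists_avg_small_finset (g : B → B) (D : Finset B)
    (hD : ∀ z ∈ D, ∃ b ∈ A, ∃ s : Γ, s ≠ 1 ∧ g z = b * (u s : B)) {δ : ℝ} (hδ : 0 < δ) :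
    ∃ Ψ ∈ avgSet A, ∀ z ∈ D, ‖Ψ (g z)‖ < δ := by
  classical
  induction D using Finset.induction_on with
  | empty =>
      exact ⟨conjCLM ((1 : ↥A) : B) (star ((1 : ↥A) : B)),
        subset_convexHull _ _ ⟨1, one_mem _, rfl⟩, fun z hz => absurd hz (Finset.notMem_empty z)⟩
  | @insert z D' hzD' ih =>
      obtain ⟨Ψ, hΨ, hsmall⟩ := ih (fun z' hz' => hD z' (Finset.mem_insert_of_mem hz'))
      obtain ⟨b, hb, s, hs, hgz⟩ := hD z (Finset.mem_insert_self _ _)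
      have hc : Ψ (g z) * star (u s : B) ∈ A := by
        rw [hgz]; exact avgSet_conj_mem_A A u α hαu hΨ hb s
      obtain ⟨Φ, hΦ, hΦs⟩ := exists_avg_small A u α hαu hSAveP hs hc hδ
      have hΨgz : (Ψ (g z) * star (u s : B)) * (u s : B) = Ψ (g z) := by
        rw [mul_assoc, Unitary.coe_star_mul_self (u s), mul_one]
      refine ⟨Φ.comp Ψ, avgSet_comp_mem A hΦ hΨ, ?_⟩
      intro z' hz'
      rcases Finset.mem_insert.1 hz' with rfl | hz'
      · rw [ContinuousLinearMap.comp_apply, ← hΨgz]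
        exact hΦs
      · rw [ContinuousLinearMap.comp_apply]
        exact lt_of_le_of_lt (avgSet_norm_le A hΦ _) (hsmall z' hz')

end Aux

set_option maxHeartbeats 1600000 in
/-- Lemma 3.1 (ii): in the abstract reduced crossed product setup for an action
`α : Γ → Aut(A)` with (SAveP), with ambient C*-algebra `B`, implementing unitaries `u_t`
and canonical conditional expectation `E`, if `x ∈ B` and `t ∈ Γ` satisfy
`E_t(x) = E(x u_t*) = 1`, then `u_t ∈ C_A^{α_{t⁻¹}}(x)`. -/
theorem unitary_mem_twisted_dixmierSet
    {B : Type*} [NormedRing B] [StarRing B] [CStarRing B] [NormedAlgebra ℂ B]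
    [CompleteSpace B] [StarModule ℂ B]
    {Γ : Type*} [Group Γ]
    (A : StarSubalgebra ℂ B) (hA : IsClosed (A : Set B))
    (u : Γ →* unitary B)
    (α : Γ → (↥A ≃⋆ₐ[ℂ] ↥A))
    (hαu : ∀ (t : Γ) (a : ↥A), ((α t a : ↥A) : B) = (u t : B) * (a : B) * star (u t : B))
    (hdense : Dense (↑(Submodule.span ℂ
      {x : B | ∃ a ∈ A, ∃ t : Γ, x = a * (u t : B)}) : Set B))
    (E : B →L[ℂ] B) (hEmem : ∀ x : B, E x ∈ A) (hEnorm : ‖E‖ ≤ 1)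
    (hEe : ∀ a ∈ A, E (a * (u 1 : B)) = a)
    (hEt : ∀ a ∈ A, ∀ t : Γ, t ≠ 1 → E (a * (u t : B)) = 0)
    (hSAveP : ∀ t : Γ, t ≠ 1 → ∀ b ∈ A, (0 : B) ∈ relC A (⇑(α t)) b)
    (x : B) (t : Γ) (hx : E (x * star (u t : B)) = 1) :
    (u t : B) ∈ relC A (⇑(α t⁻¹)) x := by
  classical
  have hu1 : ((u 1 : unitary B) : B) = 1 := by rw [map_one]; rfl
  set y := x * star ((u t : unitary B) : B) with hy
  unfold relC
  rw [Metric.mem_closure_iff]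
  intro ε hε
  set ε₁ := ε / 4 with hε₁
  have hε₁pos : 0 < ε₁ := by positivity
  obtain ⟨y', hy'span, hy'dist⟩ := Metric.mem_closure_iff.1 (hdense y) ε₁ hε₁pos
  obtain ⟨c, hcsupp, hcsum⟩ := Submodule.mem_span_set.1 hy'span
  have hchoice : ∀ z : B, ∃ p : B × Γ, z ∈ c.support → p.1 ∈ A ∧ z = p.1 * (u p.2 : B) := by
    intro z
    by_cases hz : z ∈ c.support
    · obtain ⟨a, ha, s, hzas⟩ := hcsupp hz
      exact ⟨(a, s), fun _ => ⟨ha, hzas⟩⟩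
    · exact ⟨(0, 1), fun h => absurd h hz⟩
  choose pfun hpfun using hchoice
  set a : B → B := fun z => (pfun z).1 with ha
  set s : B → Γ := fun z => (pfun z).2 with hs
  set D : Finset B := c.support.filter (fun z => s z ≠ 1) with hD
  obtain ⟨n, hn⟩ : ∃ n, D.card = n := ⟨D.card, rfl⟩
  set δ := ε₁ / (n + 1) with hδ
  have hδpos : 0 < δ := by positivity
  obtain ⟨Ψ, hΨ, hsmall⟩ := exists_avg_small_finset A u α hαu hSAveP (fun z => c z • z) D
    (by
      intro z hz
      rw [hD, Finset.mem_filter] at hz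
      obtain ⟨haz, hzeq⟩ := hpfun z hz.1
      refine ⟨c z • a z, A.smul_mem haz _, s z, hz.2, ?_⟩
      show c z • z = (c z • a z) * (u (s z) : B)
      rw [smul_mul_assoc, ← hzeq]) hδpos
  have hy'sum : y' = ∑ z ∈ c.support, c z • z := by rw [← hcsum]; rfl
  set Dc : Finset B := c.support.filter (fun z => ¬ s z ≠ 1) with hDc
  set w : B := ∑ z ∈ Dc, c z • z with hw
  have hsplit : y' = (∑ z ∈ D, c z • z) + w := by
    rw [hy'sum, hD, hw, hDc, Finset.sum_filter_add_sum_filter_not]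
  have hterm : ∀ z ∈ Dc, z = a z ∧ a z ∈ A := by
    intro z hz
    rw [hDc, Finset.mem_filter, not_not] at hz
    obtain ⟨haz, hzeq⟩ := hpfun z hz.1
    have hzeq' : z = a z * ((u (s z) : unitary B) : B) := hzeq
    rw [hz.2, hu1, mul_one] at hzeq'
    exact ⟨hzeq', haz⟩
  have hwmem : w ∈ A := by
    rw [hw]
    refine sum_mem (fun z hz => ?_)
    obtain ⟨hzeq, haz⟩ := hterm z hz
    rw [hzeq]
    exact A.smul_mem haz _
  have hEy' : E y' = w := by
    rw [hsplit, map_add]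
    have h1 : E (∑ z ∈ D, c z • z) = 0 := by
      rw [map_sum]
      refine Finset.sum_eq_zero (fun z hz => ?_)
      have hz' := hz
      rw [hD, Finset.mem_filter] at hz'
      obtain ⟨haz, hzeq⟩ := hpfun z hz'.1
      have : c z • z = (c z • a z) * (u (s z) : B) := by
        rw [smul_mul_assoc, ← hzeq]
      rw [this]
      exact hEt _ (A.smul_mem haz _) _ hz'.2
    have h2 : E w = w := by
      rw [hw, map_sum]
      refine Finset.sum_congr rfl (fun z hz => ?_)
      obtain ⟨hzeq, haz⟩ := hterm z hz
      have hz1 : c z • z = c z • a z := congrArg (fun b => c z • b) hzeq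
      calc E (c z • z) = E ((c z • a z) * ((u 1 : unitary B) : B)) := by
            rw [hu1, mul_one, ← hz1]
        _ = c z • a z := hEe _ (A.smul_mem haz _)
        _ = c z • z := hz1.symm
    rw [h1, h2, zero_add]
  have hynorm : ‖y' - y‖ < ε₁ := by
    rw [norm_sub_rev, ← dist_eq_norm]
    exact hy'dist
  have hwnorm : ‖w - 1‖ < ε₁ := by
    calc ‖w - 1‖ = ‖E y' - E y‖ := by rw [hEy', hy, hx]
      _ = ‖E (y' - y)‖ := by rw [map_sub]
      _ ≤ ‖E‖ * ‖y' - y‖ := E.le_opNorm _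
      _ ≤ 1 * ‖y' - y‖ := mul_le_mul_of_nonneg_right hEnorm (norm_nonneg _)
      _ = ‖y' - y‖ := one_mul _
      _ < ε₁ := hynorm
  have hsumD : ‖∑ z ∈ D, Ψ (c z • z)‖ ≤ ε₁ := by
    calc ‖∑ z ∈ D, Ψ (c z • z)‖ ≤ ∑ z ∈ D, ‖Ψ (c z • z)‖ := norm_sum_le _ _
      _ ≤ ∑ _z ∈ D, δ := Finset.sum_le_sum (fun z hz => le_of_lt (hsmall z hz))
      _ = (n : ℝ) * δ := by rw [Finset.sum_const, hn, nsmul_eq_mul]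
      _ ≤ ((n : ℝ) + 1) * δ := by
          have h0 : (0:ℝ) ≤ δ := le_of_lt hδpos
          nlinarith
      _ = ε₁ := by
          have hne : ((n : ℝ) + 1) ≠ 0 := by positivity
          rw [hδ, mul_comm, div_mul_cancel₀ _ hne]
  have hΨy' : ‖Ψ y' - 1‖ < 2 * ε₁ := by
    have : Ψ y' - 1 = (∑ z ∈ D, Ψ (c z • z)) + (Ψ w - 1) := by
      rw [hsplit, map_add, map_sum]
      abel
    rw [this]
    have h2 : ‖Ψ w - 1‖ < ε₁ := by
      have : Ψ w - 1 = Ψ (w - 1) := by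
        rw [map_sub, avgSet_map_one A hΨ]
      rw [this]
      exact lt_of_le_of_lt (avgSet_norm_le A hΨ _) hwnorm
    calc ‖(∑ z ∈ D, Ψ (c z • z)) + (Ψ w - 1)‖
        ≤ ‖∑ z ∈ D, Ψ (c z • z)‖ + ‖Ψ w - 1‖ := norm_add_le _ _
      _ < ε₁ + ε₁ := by
          exact add_lt_add_of_le_of_lt hsumD h2
      _ = 2 * ε₁ := by ring
  have hΨy : ‖Ψ y - 1‖ < 3 * ε₁ := by
    have : Ψ y - 1 = Ψ (y - y') + (Ψ y' - 1) := by
      rw [map_sub]; abel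
    rw [this]
    calc ‖Ψ (y - y') + (Ψ y' - 1)‖ ≤ ‖Ψ (y - y')‖ + ‖Ψ y' - 1‖ := norm_add_le _ _
      _ < ε₁ + 2 * ε₁ := by
          refine add_lt_add_of_le_of_lt ((avgSet_norm_le A hΨ _).trans ?_) hΨy'
          rw [norm_sub_rev]
          exact le_of_lt hynorm
      _ = 3 * ε₁ := by ring
  refine ⟨Ψ y * ((u t : unitary B) : B), ?_, ?_⟩
  · have himg : (evalMulₗ (B := B) y ((u t : unitary B) : B)) '' avgSet A ⊆
        convexHull ℝ {y₁ : B | ∃ v : ↥A, v ∈ unitary ↥A ∧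
          y₁ = (v : B) * x * star ((α t⁻¹ v : ↥A) : B)} := by
      rw [image_avgSet]
      apply convexHull_mono
      rintro _ ⟨_, ⟨v, hv, rfl⟩, rfl⟩
      refine ⟨v, hv, ?_⟩
      have h1 : ((u t⁻¹ : unitary B) : B) = star ((u t : unitary B) : B) := by
        rw [map_inv]; rfl
      rw [evalMulₗ_apply, conjCLM_apply, star_alpha A u α hαu t⁻¹ v, h1, star_star, hy]
      simp only [mul_assoc]
    exact himg ⟨Ψ, hΨ, rfl⟩
  · rw [dist_eq_norm]
    have heq : ((u t : unitary B) : B) - Ψ y * ((u t : unitary B) : B)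
        = (1 - Ψ y) * ((u t : unitary B) : B) := by rw [sub_mul, one_mul]
    rw [heq, CStarRing.norm_mul_mem_unitary _ (u t).2, norm_sub_rev]
    calc ‖Ψ y - 1‖ < 3 * ε₁ := hΨy
      _ < ε := by rw [hε₁]; linarith
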